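/- In the dynamic network creation game in which players' communication cost uses the temporal shortest distance, for every real atomic cost α with 0 < α < 2 and every number of players n ≥ 2, the communication temporal graph of every Nash equilibrium has temporal diameter at most 2, i.e., d_{𝒢[s]}(u, v) ≤ 2 for every ordered pair of vertices u, v. -/

import Mathlib

open scoped ENNReal BigOperators

/-- A temporal path from `u` to `v`, given as a list of steps `(next vertex, time label)`.
The labelling `lab` gives, for each (ordered) pair of vertices, the set of time labels of the
edge joining them (empty if there is no edge); it is symmetric for temporal graphs arising
from strategy profiles.  The conditions say that consecutive steps use time labels belonging
to the corresponding edge, that time labels strictly increase along the path, that no vertex is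
repeated, and that the path ends at `v`. -/
def IsTemporalPath {V : Type*} (lab : V → V → Set ℕ) (u v : V) (p : List (V × ℕ)) : Prop :=
  List.Chain (fun a b => b.2 ∈ lab a.1 b.1) (u, 0) p ∧
  List.Chain' (· < ·) (p.map Prod.snd) ∧
  (u :: p.map Prod.fst).Nodup ∧
  (u :: p.map Prod.fst).getLast (List.cons_ne_nil _ _) = v

/-- The temporal shortest distance from `u` to `v`: the least number of edges of a temporal
path from `u` to `v` (`0` if `u = v`, `⊤` if there is no temporal path). -/
noncomputable def temporalDist {V : Type*} (lab : V → V → Set ℕ) (u v : V) : ℕ∞ :=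
  sInf {n : ℕ∞ | ∃ p : List (V × ℕ), IsTemporalPath lab u v p ∧ (p.length : ℕ∞) = n}

/-- The labelling of the communication temporal graph `𝒢[s]` of a strategy profile `s`:
`t` is a label of the edge `uv` iff `(u, t) ∈ s v` or `(v, t) ∈ s u`. -/
def profLab {V : Type*} (s : V → Finset (V × ℕ)) : V → V → Set ℕ :=
  fun u v => {t | (u, t) ∈ s v ∨ (v, t) ∈ s u}

/-- The (finite) set of time labels of the edge `uv` in the communication temporal graph. -/
def labelFinset {V : Type*} [DecidableEq V] (s : V → Finset (V × ℕ)) (u v : V) : Finset ℕ :=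
  (((s v).filter (fun p => p.1 = u)).image Prod.snd) ∪
    (((s u).filter (fun p => p.1 = v)).image Prod.snd)

/-- The total number of time labels `∑ e ∈ E, |λ(e)|` of the communication temporal graph
(each unordered pair is counted once, whence the division by `2`). -/
def numLabels {V : Type*} [Fintype V] [DecidableEq V] (s : V → Finset (V × ℕ)) : ℕ :=
  (∑ u : V, ∑ v : V, if u = v then 0 else (labelFinset s u v).card) / 2

/-- The number of edges `|E|` of the communication temporal graph. -/
def numEdges {V : Type*} [Fintype V] [DecidableEq V] (s : V → Finset (V × ℕ)) : ℕ :=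
  ((Finset.univ : Finset (V × V)).filter
    (fun q => q.1 ≠ q.2 ∧ (labelFinset s q.1 q.2).Nonempty)).card / 2

/-- The social cost `c[s] = α·∑_{e ∈ E} |λ(e)| + ∑_{(u,v) ∈ V×V} d_{𝒢[s]}(u,v)`
of a strategy profile `s` for atomic cost `α`. -/
noncomputable def socialCost {V : Type*} [Fintype V] [DecidableEq V]
    (α : ℝ) (s : V → Finset (V × ℕ)) : ℝ≥0∞ :=
  ENNReal.ofReal α * (numLabels s : ℝ≥0∞) +
    ∑ u : V, ∑ v : V, (temporalDist (profLab s) u v : ℝ≥0∞)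

/-- The individual cost `c[s](v) = α·|s(v)| + ∑_{w ∈ V} d_{𝒢[s]}(v,w)` of player `v`. -/
noncomputable def indivCost {V : Type*} [Fintype V]
    (α : ℝ) (s : V → Finset (V × ℕ)) (v : V) : ℝ≥0∞ :=
  ENNReal.ofReal α * ((s v).card : ℝ≥0∞) +
    ∑ w : V, (temporalDist (profLab s) v w : ℝ≥0∞)

/-- A strategy profile is a Nash equilibrium if no player can strictly decrease its individual
cost by changing only its own strategy. -/
def IsNash {V : Type*} [Fintype V] [DecidableEq V] (α : ℝ) (s : V → Finset (V × ℕ)) : Prop :=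
  ∀ (v : V) (t : Finset (V × ℕ)),
    ¬ indivCost α (Function.update s v t) v < indivCost α s v

/-- The optimal social cost `c*(α, n)`: the minimum social cost over all strategy profiles
with `n` players and atomic cost `α`. -/
noncomputable def optCost (α : ℝ) (n : ℕ) : ℝ≥0∞ :=
  ⨅ s : Fin n → Finset (Fin n × ℕ), socialCost α s

/-- The price of anarchy `PoA(α, n)`: the maximum social cost of a Nash equilibrium with `n`
players and atomic cost `α`, divided by the optimal social cost `c*(α, n)`. -/
noncomputable def PoA (α : ℝ) (n : ℕ) : ℝ≥0∞ :=
  (⨆ s : {s : Fin n → Finset (Fin n × ℕ) // IsNash α s}, socialCost α s.1) / optCost α n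

/-- The price of stability `PoS(α, n)`: the minimum social cost of a Nash equilibrium with `n`
players and atomic cost `α`, divided by the optimal social cost `c*(α, n)`. -/
noncomputable def PoS (α : ℝ) (n : ℕ) : ℝ≥0∞ :=
  (⨅ s : {s : Fin n → Finset (Fin n × ℕ) // IsNash α s}, socialCost α s.1) / optCost α n

lemma temporalDist_self' {V : Type*} (lab : V → V → Set ℕ) (u : V) :
    temporalDist lab u u = 0 := by
  refine le_antisymm (sInf_le ⟨[], ⟨List.Chain.nil, List.isChain_nil, by simp, by simp⟩, by simp⟩)
    (zero_le)

lemma temporalDist_le_one' {V : Type*} {lab : V → V → Set ℕ} {u v : V} {t : ℕ}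
    (ht : t ∈ lab u v) (huv : u ≠ v) : temporalDist lab u v ≤ 1 := by
  refine sInf_le ⟨[(v, t)], ⟨?_, List.isChain_singleton _, by simp [huv], by simp⟩, by simp⟩
  exact List.Chain.cons ht List.Chain.nil

lemma temporalDist_mono' {V : Type*} {lab lab' : V → V → Set ℕ}
    (h : ∀ x y, lab x y ⊆ lab' x y) (u v : V) :
    temporalDist lab' u v ≤ temporalDist lab u v := by
  apply sInf_le_sInf
  rintro m ⟨p, ⟨h1, h2, h3, h4⟩, rfl⟩
  exact ⟨p, ⟨List.IsChain.imp (fun a b hb => h a.1 b.1 hb) h1, h2, h3, h4⟩, rfl⟩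

/-- For every atomic cost `0 < α < 2` and every number of players `n ≥ 2`, the communication
temporal graph of every Nash equilibrium has temporal diameter at most `2`. -/
theorem statement_10 (α : ℝ) (hα0 : 0 < α) (hα2 : α < 2) (n : ℕ) (hn : 2 ≤ n)
    (s : Fin n → Finset (Fin n × ℕ)) (hs : IsNash α s) :
    ∀ u v : Fin n, temporalDist (profLab s) u v ≤ 2 := by
  intro u v
  by_contra hle
  push_neg at hle
  have huv : u ≠ v := by
    rintro rfl
    rw [temporalDist_self'] at hle
    exact absurd hle (by simp)
  set A : ℝ≥0∞ := ENNReal.ofReal α with hA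
  have hA_ne : A ≠ ⊤ := ENNReal.ofReal_ne_top
  by_cases hS : (∑ w : Fin n, ((temporalDist (profLab s) u w : ℕ∞) : ℝ≥0∞)) = ⊤
  · -- infinite case: player u buys edges to everybody at time 0
    set t0 : Finset (Fin n × ℕ) := Finset.univ.image (fun w => (w, 0)) with ht0
    refine hs u t0 ?_
    have hold : indivCost α s u = ⊤ := by
      unfold indivCost
      rw [hS, add_top]
    rw [hold, lt_top_iff_ne_top]
    unfold indivCost
    intro hcon
    rcases ENNReal.add_eq_top.mp hcon with h1 | h2
    · exact ENNReal.mul_ne_top hA_ne (ENNReal.natCast_ne_top _) h1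
    · have : ∀ w : Fin n,
          ((temporalDist (profLab (Function.update s u t0)) u w : ℕ∞) : ℝ≥0∞) < ⊤ := by
        intro w
        by_cases hwu : w = u
        · subst hwu; rw [temporalDist_self']; simp
        · have hmem : (0 : ℕ) ∈ profLab (Function.update s u t0) u w := by
            right
            rw [Function.update_self]
            exact Finset.mem_image.mpr ⟨w, Finset.mem_univ _, rfl⟩
          have := temporalDist_le_one' hmem (Ne.symm hwu)
          calc ((temporalDist (profLab (Function.update s u t0)) u w : ℕ∞) : ℝ≥0∞)
              ≤ ((1 : ℕ∞) : ℝ≥0∞) := ENat.toENNReal_le.mpr this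
            _ < ⊤ := by simp
      exact absurd h2 (ENNReal.sum_lt_top.mpr (fun w _ => this w)).ne
  · -- finite case: player u buys the edge uv at time 0
    set t1 : Finset (Fin n × ℕ) := insert (v, 0) (s u) with ht1
    set lab' := profLab (Function.update s u t1) with hlab'
    have hsub : ∀ x y : Fin n, profLab s x y ⊆ lab' x y := by
      intro x y r hr
      rcases hr with h | h
      · left
        by_cases hy : y = u
        · subst hy; rw [Function.update_self]; exact Finset.mem_insert_of_mem h
        · rwa [Function.update_of_ne hy]
      · right
        by_cases hx : x = u
        · subst hx; rw [Function.update_self]; exact Finset.mem_insert_of_mem h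
        · rwa [Function.update_of_ne hx]
    have hmono : ∀ w : Fin n, temporalDist lab' u w ≤ temporalDist (profLab s) u w :=
      fun w => temporalDist_mono' hsub u w
    -- each distance from u is finite
    have hfin : ∀ w : Fin n, ((temporalDist (profLab s) u w : ℕ∞) : ℝ≥0∞) ≠ ⊤ := by
      intro w
      have := ENNReal.sum_lt_top.mp (lt_top_iff_ne_top.mpr hS) w (Finset.mem_univ w)
      exact this.ne
    -- d(u,v) is a natural number ≥ 3
    have hDne : temporalDist (profLab s) u v ≠ ⊤ := by
      intro h
      exact hfin v (by rw [h, ENat.toENNReal_top])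
    have hD3 : (3 : ℝ≥0∞) ≤ ((temporalDist (profLab s) u v : ℕ∞) : ℝ≥0∞) := by
      lift temporalDist (profLab s) u v to ℕ using hDne with m hm
      have h2m : (2 : ℕ∞) < (m : ℕ∞) := hle
      have : 2 < m := by exact_mod_cast h2m
      have h3m : 3 ≤ m := this
      rw [ENat.toENNReal_coe]
      exact_mod_cast h3m
    refine hs u t1 ?_
    -- notation for the sums over w ≠ v
    set S : ℝ≥0∞ := ∑ w ∈ Finset.univ.erase v,
      ((temporalDist (profLab s) u w : ℕ∞) : ℝ≥0∞) with hSdef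
    have hS_ne : S ≠ ⊤ := by
      refine (ENNReal.sum_lt_top.mpr ?_).ne
      exact fun w _ => lt_top_iff_ne_top.mpr (hfin w)
    have hAk_ne : A * ((s u).card : ℝ≥0∞) ≠ ⊤ :=
      ENNReal.mul_ne_top hA_ne (ENNReal.natCast_ne_top _)
    -- old cost
    have hold : indivCost α s u =
        A * ((s u).card : ℝ≥0∞) +
          (((temporalDist (profLab s) u v : ℕ∞) : ℝ≥0∞) + S) := by
      unfold indivCost
      rw [← Finset.add_sum_erase _ _ (Finset.mem_univ v)]
    -- new distance bound to v
    have hd'v : ((temporalDist lab' u v : ℕ∞) : ℝ≥0∞) ≤ 1 := by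
      have hmem : (0 : ℕ) ∈ lab' u v := by
        right
        show (v, 0) ∈ Function.update s u t1 u
        rw [Function.update_self]
        exact Finset.mem_insert_self _ _
      calc ((temporalDist lab' u v : ℕ∞) : ℝ≥0∞)
          ≤ ((1 : ℕ∞) : ℝ≥0∞) := ENat.toENNReal_le.mpr (temporalDist_le_one' hmem huv)
        _ = 1 := ENat.toENNReal_one
    -- new cost bound
    have hnew : indivCost α (Function.update s u t1) u ≤
        A * ((s u).card : ℝ≥0∞) + (A + (1 + S)) := by
      unfold indivCost
      rw [Function.update_self,
        ← Finset.add_sum_erase _ _ (Finset.mem_univ v)]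
      have hc : ((t1.card : ℕ) : ℝ≥0∞) ≤ ((s u).card : ℝ≥0∞) + 1 := by
        have := Finset.card_insert_le (v, 0) (s u)
        exact_mod_cast this
      calc A * ((t1.card : ℕ) : ℝ≥0∞) +
            (((temporalDist lab' u v : ℕ∞) : ℝ≥0∞) +
              ∑ w ∈ Finset.univ.erase v, ((temporalDist lab' u w : ℕ∞) : ℝ≥0∞))
          ≤ A * (((s u).card : ℝ≥0∞) + 1) + (1 + S) := by
            refine add_le_add (mul_le_mul_right hc A) (add_le_add hd'v ?_)
            exact Finset.sum_le_sum fun w _ => ENat.toENNReal_le.mpr (hmono w)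
        _ = A * ((s u).card : ℝ≥0∞) + (A + (1 + S)) := by ring
    -- conclude
    rw [hold]
    refine lt_of_le_of_lt hnew ?_
    refine ENNReal.add_lt_add_left hAk_ne ?_
    have hA2' : A + 1 < 3 := by
      have : A < 2 := by
        rw [hA]
        calc ENNReal.ofReal α < ENNReal.ofReal 2 :=
          (ENNReal.ofReal_lt_ofReal_iff (by norm_num)).mpr hα2
        _ = 2 := by norm_num [ENNReal.ofReal_ofNat]
      calc A + 1 < 2 + 1 := ENNReal.add_lt_add_right ENNReal.one_ne_top this
        _ = 3 := by norm_num
    calc A + (1 + S) = (A + 1) + S := by ring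
      _ < 3 + S := ENNReal.add_lt_add_right hS_ne hA2'
      _ ≤ ((temporalDist (profLab s) u v : ℕ∞) : ℝ≥0∞) + S := add_le_add_left hD3 S
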